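/- arXiv:1701.07216 — 2 statements merged into one kernel-verified Lean document; each statement's English description precedes it below -/
import Mathlib

section
/- For every n ≥ 1, the sum over all alternative tableaux T of size n in which every column contains an up arrow, of a^{top(T)} b^{urr(T)-1}, equals the rising factorial (a+b)_{n-1}, where top(T) is the number of arrows in the topmost row and urr(T) is the number of rows containing no left arrow. -/
open Finset Polynomial
open scoped Classical

/-! ### Tree-like tableaux (grid model)
A cell is a pair (row index, column index), both 0-based.  A Ferrers diagram
is a finite lower set of cells.  A tree-like tableau of size `n` is a pair
`(F, P)` where `P` is the set of pointed cells of the diagram `F`. -/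

def IsFerrersGrid (F : Finset (ℕ × ℕ)) : Prop :=
  ∀ p ∈ F, ∀ i j : ℕ, i ≤ p.1 → j ≤ p.2 → (i, j) ∈ F

def IsTLT (F P : Finset (ℕ × ℕ)) : Prop :=
  F.Nonempty ∧ IsFerrersGrid F ∧ P ⊆ F ∧ (0, 0) ∈ P ∧
  (∀ p ∈ P, p ≠ (0, 0) →
    Xor' (∃ i < p.1, (i, p.2) ∈ P) (∃ j < p.2, (p.1, j) ∈ P)) ∧
  (∀ p ∈ F, ∃ q ∈ P, q.1 = p.1) ∧
  (∀ p ∈ F, ∃ q ∈ P, q.2 = p.2)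

/-- The finite set of tree-like tableaux of size `n`. -/
noncomputable def TLT (n : ℕ) : Finset (Finset (ℕ × ℕ) × Finset (ℕ × ℕ)) :=
  ((Finset.range n ×ˢ Finset.range n).powerset ×ˢ
    (Finset.range n ×ˢ Finset.range n).powerset).filter
    (fun T => IsTLT T.1 T.2 ∧ T.2.card = n)

/-- number of non-root points in the topmost row -/
noncomputable def topT (P : Finset (ℕ × ℕ)) : ℕ :=
  (P.filter (fun p => p.1 = 0 ∧ p.2 ≠ 0)).card
/-- number of non-root points in the leftmost column -/
noncomputable def leftT (P : Finset (ℕ × ℕ)) : ℕ :=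
  (P.filter (fun p => p.2 = 0 ∧ p.1 ≠ 0)).card
/-- corners of a Ferrers diagram -/
noncomputable def cornersT (F : Finset (ℕ × ℕ)) : Finset (ℕ × ℕ) :=
  F.filter (fun p => (p.1 + 1, p.2) ∉ F ∧ (p.1, p.2 + 1) ∉ F)
/-- non-occupied corners -/
noncomputable def nocT (F P : Finset (ℕ × ℕ)) : ℕ :=
  ((cornersT F).filter (fun p => p ∉ P)).card
/-- occupied corners -/
noncomputable def ocT (F P : Finset (ℕ × ℕ)) : ℕ :=
  ((cornersT F).filter (fun p => p ∈ P)).card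
/-- symmetric (invariant under reflection across the main diagonal) -/
def IsSymTLT (F P : Finset (ℕ × ℕ)) : Prop :=
  F.image Prod.swap = F ∧ P.image Prod.swap = P

/-! ### Alternative tableaux (border-label model)
A Ferrers diagram of size `n` (empty rows and columns allowed) is encoded by
the set `C ⊆ {1,…,n}` of its column labels (labels of the south-east border
steps, read from north-east to south-west); the remaining labels are row
labels.  Row `r` and column `c` intersect in a cell (written `(r, c)`)
exactly when `r < c`.  Inside a row, cells further to the left have *larger*
column labels; inside a column, cells further up have *smaller* row labels.
An alternative tableau is `(C, L, U)` where `L` (resp. `U`) is the set of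
cells containing a left (resp. up) arrow. -/

def IsAT (n : ℕ) (C : Finset ℕ) (L U : Finset (ℕ × ℕ)) : Prop :=
  C ⊆ Finset.Icc 1 n ∧ Disjoint L U ∧
  (∀ p ∈ L ∪ U, p.1 ∈ Finset.Icc 1 n ∧ p.1 ∉ C ∧ p.2 ∈ C ∧ p.1 < p.2) ∧
  (∀ p ∈ L, ∀ c' : ℕ, p.2 < c' → (p.1, c') ∉ L ∪ U) ∧
  (∀ p ∈ U, ∀ r' : ℕ, r' < p.1 → (r', p.2) ∉ L ∪ U)

/-- the finite set of alternative tableaux of size `n` -/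
noncomputable def ATset (n : ℕ) :
    Finset (Finset ℕ × Finset (ℕ × ℕ) × Finset (ℕ × ℕ)) :=
  ((Finset.Icc 1 n).powerset ×ˢ
    ((Finset.Icc 1 n ×ˢ Finset.Icc 1 n).powerset ×ˢ
      (Finset.Icc 1 n ×ˢ Finset.Icc 1 n).powerset)).filter
    (fun T => IsAT n T.1 T.2.1 T.2.2)

/-- alternative tableaux of size `n` in which every column contains an up arrow -/
noncomputable def ATstar (n : ℕ) :
    Finset (Finset ℕ × Finset (ℕ × ℕ) × Finset (ℕ × ℕ)) :=
  (ATset n).filter (fun T => ∀ c ∈ T.1, ∃ p ∈ T.2.2, p.2 = c)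

/-- label of the topmost row -/
noncomputable def topRowA (n : ℕ) (C : Finset ℕ) : ℕ :=
  ((Finset.Icc 1 n \ C).min).untopD 0
/-- number of arrows in the topmost row -/
noncomputable def topA (n : ℕ) (C : Finset ℕ) (L U : Finset (ℕ × ℕ)) : ℕ :=
  ((L ∪ U).filter (fun p => p.1 = topRowA n C)).card
/-- number of unrestricted rows (rows with no left arrow) -/
noncomputable def urrA (n : ℕ) (C : Finset ℕ) (L : Finset (ℕ × ℕ)) : ℕ :=
  ((Finset.Icc 1 n \ C).filter (fun r => ∀ p ∈ L, p.1 ≠ r)).card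
/-- number of non-occupied corners (the corners are exactly the cells `(c-1, c)`
with `c` a column label and `c-1` a row label) -/
noncomputable def nocA (n : ℕ) (C : Finset ℕ) (L U : Finset (ℕ × ℕ)) : ℕ :=
  (C.filter (fun c => c - 1 ∈ Finset.Icc 1 n \ C ∧ (c - 1, c) ∉ L ∪ U)).card
/-- symmetric alternative tableau of size `2n` (reflection across the main
diagonal exchanges border label `k` with `2n+1-k`, rows with columns and
left arrows with up arrows) -/
def IsSymAT (n : ℕ) (C : Finset ℕ) (L U : Finset (ℕ × ℕ)) : Prop :=
  (∀ k ∈ Finset.Icc 1 (2 * n), (k ∈ C ↔ (2 * n + 1 - k) ∉ C)) ∧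
  (∀ r c : ℕ, (r, c) ∈ L ↔ (2 * n + 1 - c, 2 * n + 1 - r) ∈ U)

/-! ### Linked partitions (linear representation / arc model)
A linked partition of `{1,…,n}` is identified with its set of arcs `(i, j)`,
`i < j`: each vertex is the right-hand endpoint of at most one arc. -/

def IsLP (n : ℕ) (A : Finset (ℕ × ℕ)) : Prop :=
  (∀ p ∈ A, 1 ≤ p.1 ∧ p.1 < p.2 ∧ p.2 ≤ n) ∧
  (∀ p ∈ A, ∀ q ∈ A, p.2 = q.2 → p.1 = q.1)

noncomputable def LP (n : ℕ) : Finset (Finset (ℕ × ℕ)) :=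
  ((Finset.Icc 1 n ×ˢ Finset.Icc 1 n).powerset).filter (IsLP n)

/-- number of origins plus singletons (= vertices with no incoming arc) -/
noncomputable def osL (n : ℕ) (A : Finset (ℕ × ℕ)) : ℕ :=
  ((Finset.Icc 1 n).filter (fun j => ∀ p ∈ A, p.2 ≠ j)).card
/-- number of arcs with left-hand endpoint `1` -/
noncomputable def oneL (A : Finset (ℕ × ℕ)) : ℕ :=
  (A.filter (fun p => p.1 = 1)).card
/-- a destination: only a right-hand endpoint -/
def IsDest (A : Finset (ℕ × ℕ)) (j : ℕ) : Prop :=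
  (∃ p ∈ A, p.2 = j) ∧ ∀ p ∈ A, p.1 ≠ j

/-- consecutive pairs of a finite set of naturals -/
noncomputable def consecPairs (S : Finset ℕ) : Finset (ℕ × ℕ) :=
  (S ×ˢ S).filter (fun p => p.1 < p.2 ∧ ∀ k ∈ S, ¬(p.1 < k ∧ k < p.2))

/-- the set of row labels of cells of column `c` containing an arrow -/
noncomputable def colRows (L U : Finset (ℕ × ℕ)) (c : ℕ) : Finset ℕ :=
  ((L ∪ U).filter (fun p => p.2 = c)).image Prod.fst

/-- the map `Φ`: for each column `j`, with the up arrow in row `i₁` and the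
left arrows in rows `i₂ < … < i_t`, draw the arcs `(i₁,i₂), …, (i_{t-1},i_t), (i_t, j)`,
i.e. the consecutive pairs of `{i₁,…,i_t, j}`. -/
noncomputable def Phi (T : Finset ℕ × Finset (ℕ × ℕ) × Finset (ℕ × ℕ)) :
    Finset (ℕ × ℕ) :=
  T.1.biUnion (fun c => consecPairs (insert c (colRows T.2.1 T.2.2 c)))

/-! ### Type B alternative tableaux
Encoded by `(C, L, U)` with `C ⊆ Icc 1 n` the set of column labels of the
subdiagram; rows of the shifted diagram are labelled by
`(Icc 1 n \ C) ∪ (-C)`, rows higher up having smaller labels.  Row `x` and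
column `c` intersect in a cell exactly when (`x > 0` and `x < c`) or
(`x < 0` and `-x ≤ c`); the cell `(-c, c)` is the diagonal cell of row `-c`. -/

def cellB (n : ℕ) (C : Finset ℤ) (x c : ℤ) : Prop :=
  c ∈ C ∧ ((1 ≤ x ∧ x ≤ (n : ℤ) ∧ x ∉ C ∧ x < c) ∨ (x < 0 ∧ -x ∈ C ∧ -x ≤ c))

def IsATB (n : ℕ) (C : Finset ℤ) (L U : Finset (ℤ × ℤ)) : Prop :=
  C ⊆ Finset.Icc 1 (n : ℤ) ∧ Disjoint L U ∧
  (∀ p ∈ L ∪ U, p.2 ∈ C ∧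
    ((1 ≤ p.1 ∧ p.1 ≤ (n : ℤ) ∧ p.1 ∉ C ∧ p.1 < p.2) ∨
      (p.1 < 0 ∧ -p.1 ∈ C ∧ -p.1 < p.2))) ∧
  (∀ p ∈ L, ∀ c' : ℤ, p.2 < c' → (p.1, c') ∉ L ∪ U) ∧
  (∀ p ∈ U, ∀ x' : ℤ, x' < p.1 → (x', p.2) ∉ L ∪ U) ∧
  (∀ i ∈ C, (∃ p ∈ U, p.2 = i) → ∀ c' : ℤ, (-i, c') ∉ L ∪ U)

noncomputable def ATB (n : ℕ) :
    Finset (Finset ℤ × Finset (ℤ × ℤ) × Finset (ℤ × ℤ)) :=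
  ((Finset.Icc (1 : ℤ) (n : ℤ)).powerset ×ˢ
    ((Finset.Icc (-(n : ℤ)) (n : ℤ) ×ˢ Finset.Icc (1 : ℤ) (n : ℤ)).powerset ×ˢ
      (Finset.Icc (-(n : ℤ)) (n : ℤ) ×ˢ Finset.Icc (1 : ℤ) (n : ℤ)).powerset)).filter
    (fun T => IsATB n T.1 T.2.1 T.2.2)

/-- the row labels of a type B alternative tableau -/
noncomputable def rowsB (n : ℕ) (C : Finset ℤ) : Finset ℤ :=
  (Finset.Icc (1 : ℤ) (n : ℤ) \ C) ∪ C.image (fun c => -c)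

/-- number of unrestricted rows: row `x` is unrestricted when it contains no
left arrow and column `|x|` (if it exists) contains no up arrow -/
noncomputable def urrB (n : ℕ) (C : Finset ℤ) (L U : Finset (ℤ × ℤ)) : ℕ :=
  ((rowsB n C).filter (fun x => (∀ p ∈ L, p.1 ≠ x) ∧ ∀ p ∈ U, p.2 ≠ |x|)).card

/-- the corners of the shifted Ferrers diagram -/
noncomputable def cornersB (n : ℕ) (C : Finset ℤ) : Finset (ℤ × ℤ) :=
  (Finset.Icc (-(n : ℤ)) (n : ℤ) ×ˢ Finset.Icc (1 : ℤ) (n : ℤ)).filter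
    (fun p => cellB n C p.1 p.2 ∧ (∀ x' : ℤ, p.1 < x' → ¬ cellB n C x' p.2) ∧
      (∀ c' : ℤ, c' < p.2 → ¬ cellB n C p.1 c'))

/-- number of non-occupied diagonal corners -/
noncomputable def nocDiagB (n : ℕ) (C : Finset ℤ) (L U : Finset (ℤ × ℤ)) : ℕ :=
  ((cornersB n C).filter (fun p => p.1 = -p.2 ∧ p ∉ L ∪ U)).card
/-- number of non-occupied non-diagonal corners -/
noncomputable def nocOffB (n : ℕ) (C : Finset ℤ) (L U : Finset (ℤ × ℤ)) : ℕ :=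
  ((cornersB n C).filter (fun p => p.1 ≠ -p.2 ∧ p ∉ L ∪ U)).card

/-! ### Type B linked partitions
A pair `(V, A)`: for each `i ∈ {1,…,n}` exactly one of `i, -i` belongs to
the vertex set `V`; `A` is the set of arcs `(x, y)`, `x < y`, with each
vertex the right-hand endpoint of at most one arc. -/

def IsLPB (n : ℕ) (V : Finset ℤ) (A : Finset (ℤ × ℤ)) : Prop :=
  (∀ v ∈ V, 1 ≤ |v| ∧ |v| ≤ (n : ℤ)) ∧
  (∀ i ∈ Finset.Icc (1 : ℤ) (n : ℤ), ((i ∈ V ∧ -i ∉ V) ∨ (-i ∈ V ∧ i ∉ V))) ∧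
  (∀ p ∈ A, p.1 ∈ V ∧ p.2 ∈ V ∧ p.1 < p.2) ∧
  (∀ p ∈ A, ∀ q ∈ A, p.2 = q.2 → p.1 = q.1)

noncomputable def LPB (n : ℕ) : Finset (Finset ℤ × Finset (ℤ × ℤ)) :=
  ((Finset.Icc (-(n : ℤ)) (n : ℤ)).powerset ×ˢ
    (Finset.Icc (-(n : ℤ)) (n : ℤ) ×ˢ Finset.Icc (-(n : ℤ)) (n : ℤ)).powerset).filter
    (fun T => IsLPB n T.1 T.2)

/-- number of origins plus singletons (= vertices with no incoming arc) -/
noncomputable def osB (V : Finset ℤ) (A : Finset (ℤ × ℤ)) : ℕ :=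
  (V.filter (fun v => ∀ p ∈ A, p.2 ≠ v)).card

/-- a legal destination: `j` is only a right-hand endpoint, and its incoming
arc `(a, j)` satisfies `|a| < |j|` -/
def IsLegalDestB (A : Finset (ℤ × ℤ)) (j : ℤ) : Prop :=
  (∃ p ∈ A, p.2 = j ∧ |p.1| < |j|) ∧ ∀ p ∈ A, p.1 ≠ j

/-- consecutive pairs of a finite set of integers -/
noncomputable def consecPairsZ (S : Finset ℤ) : Finset (ℤ × ℤ) :=
  (S ×ˢ S).filter (fun p => p.1 < p.2 ∧ ∀ k ∈ S, ¬(p.1 < k ∧ k < p.2))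

/-- row labels of cells of column `c` containing an arrow -/
noncomputable def colRowsB (L U : Finset (ℤ × ℤ)) (c : ℤ) : Finset ℤ :=
  ((L ∪ U).filter (fun p => p.2 = c)).image Prod.fst

/-- column `c` contains an up arrow -/
def HasUp (U : Finset (ℤ × ℤ)) (c : ℤ) : Prop := ∃ p ∈ U, p.2 = c

/-- the map `Φ_B`: columns with an up arrow give positive vertices and chains
of arcs through their arrows (consecutive pairs of the arrow rows together
with the column label); columns without an up arrow give negative vertices
`-j` and arcs from `-j` to each row containing a left arrow of that column;
rows give positive vertices. -/
noncomputable def PhiB (n : ℕ) (T : Finset ℤ × Finset (ℤ × ℤ) × Finset (ℤ × ℤ)) :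
    Finset ℤ × Finset (ℤ × ℤ) :=
  ((Finset.Icc (1 : ℤ) (n : ℤ) \ T.1) ∪ T.1.filter (fun c => HasUp T.2.2 c) ∪
      (T.1.filter (fun c => ¬ HasUp T.2.2 c)).image (fun c => -c),
    (T.1.filter (fun c => HasUp T.2.2 c)).biUnion
        (fun c => consecPairsZ (insert c (colRowsB T.2.1 T.2.2 c))) ∪
      (T.1.filter (fun c => ¬ HasUp T.2.2 c)).biUnion
        (fun c => (colRowsB T.2.1 T.2.2 c).image (fun r => (-c, r))))

/-! ### Auxiliary material for the proof -/

section AuxAT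

abbrev ATT := Finset ℕ × Finset (ℕ × ℕ) × Finset (ℕ × ℕ)

/-- the set of unrestricted rows -/
noncomputable def URR (n : ℕ) (C : Finset ℕ) (L : Finset (ℕ × ℕ)) : Finset ℕ :=
  (Finset.Icc 1 n \ C).filter (fun r => ∀ p ∈ L, p.1 ≠ r)

lemma urrA_eq_card (n : ℕ) (C : Finset ℕ) (L : Finset (ℕ × ℕ)) :
    urrA n C L = (URR n C L).card := rfl

lemma mem_ATstar_iff {n : ℕ} {T : ATT} :
    T ∈ ATstar n ↔ IsAT n T.1 T.2.1 T.2.2 ∧ ∀ c ∈ T.1, ∃ p ∈ T.2.2, p.2 = c := by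
  constructor
  · intro h
    rw [ATstar, Finset.mem_filter, ATset, Finset.mem_filter] at h
    exact ⟨h.1.2, h.2⟩
  · rintro ⟨hA, hs⟩
    have hC := hA.1
    have hcell := hA.2.2.1
    rw [ATstar, Finset.mem_filter, ATset, Finset.mem_filter]
    refine ⟨⟨?_, hA⟩, hs⟩
    rw [Finset.mem_product, Finset.mem_product]
    refine ⟨Finset.mem_powerset.2 hC, Finset.mem_powerset.2 ?_, Finset.mem_powerset.2 ?_⟩
    · intro p hp
      have h1 := hcell p (Finset.mem_union_left _ hp)
      exact Finset.mem_product.2 ⟨h1.1, hC h1.2.2.1⟩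
    · intro p hp
      have h1 := hcell p (Finset.mem_union_right _ hp)
      exact Finset.mem_product.2 ⟨h1.1, hC h1.2.2.1⟩

variable {n : ℕ} {C : Finset ℕ} {L U : Finset (ℕ × ℕ)}

lemma isAT_mono (hA : IsAT n C L U) : IsAT (n + 1) C L U := by
  obtain ⟨hC, hdis, hcell, hL, hU⟩ := hA
  refine ⟨?_, hdis, ?_, hL, hU⟩
  · intro c hc
    have := Finset.mem_Icc.1 (hC hc)
    exact Finset.mem_Icc.2 ⟨this.1, by omega⟩
  · intro p hp
    obtain ⟨h1, h2, h3, h4⟩ := hcell p hp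
    have := Finset.mem_Icc.1 h1
    exact ⟨Finset.mem_Icc.2 ⟨this.1, by omega⟩, h2, h3, h4⟩

lemma up_unique (hA : IsAT n C L U) :
    ∀ p ∈ U, ∀ q ∈ U, p.2 = q.2 → p = q := by
  intro p hp q hq h2
  rcases lt_trichotomy p.1 q.1 with hlt | heq | hgt
  · exact absurd (by rw [← h2]; exact Finset.mem_union_right L (show (p.1, p.2) ∈ U by simpa using hp))
      (hA.2.2.2.2 q hq p.1 hlt)
  · exact Prod.ext heq h2
  · exact absurd (by rw [h2]; exact Finset.mem_union_right L (show (q.1, q.2) ∈ U by simpa using hq))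
      (hA.2.2.2.2 p hp q.1 hgt)

lemma one_not_mem_C (hA : IsAT n C L U) (hs : ∀ c ∈ C, ∃ p ∈ U, p.2 = c) :
    1 ∉ C := by
  intro h1
  obtain ⟨p, hp, hp2⟩ := hs 1 h1
  obtain ⟨hc1, _, _, hc4⟩ := hA.2.2.1 p (Finset.mem_union_right L hp)
  have := (Finset.mem_Icc.1 hc1).1
  omega

lemma no_left_one (hA : IsAT n C L U) (hs : ∀ c ∈ C, ∃ p ∈ U, p.2 = c) :
    ∀ p ∈ L, p.1 ≠ 1 := by
  intro p hp h1
  obtain ⟨q, hq, hq2⟩ := hs p.2 ((hA.2.2.1 p (Finset.mem_union_left U hp)).2.2.1)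
  have hq1 := (Finset.mem_Icc.1 (hA.2.2.1 q (Finset.mem_union_right L hq)).1).1
  rcases eq_or_lt_of_le hq1 with heq | hlt
  · have : q = p := Prod.ext (by omega) hq2
    exact Finset.disjoint_left.1 hA.2.1 hp (this ▸ hq)
  · refine hA.2.2.2.2 q hq 1 hlt ?_
    rw [hq2]
    exact Finset.mem_union_left U (show (1, p.2) ∈ L by rw [← h1]; simpa using hp)

lemma topRow_one (hn : 1 ≤ n) (hA : IsAT n C L U) (hs : ∀ c ∈ C, ∃ p ∈ U, p.2 = c) :
    topRowA n C = 1 := by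
  have h1 : 1 ∈ Finset.Icc 1 n \ C :=
    Finset.mem_sdiff.2 ⟨Finset.mem_Icc.2 ⟨le_refl 1, hn⟩, one_not_mem_C hA hs⟩
  have hmin : (Finset.Icc 1 n \ C).min = (1 : ℕ) := by
    refine le_antisymm (Finset.min_le h1) (Finset.le_min ?_)
    intro b hb
    have := (Finset.mem_Icc.1 (Finset.mem_sdiff.1 hb).1).1
    exact WithTop.coe_le_coe.2 this |>.trans_eq' (by norm_num)
  simp [topRowA, hmin]

lemma one_mem_URR (hn : 1 ≤ n) (hA : IsAT n C L U) (hs : ∀ c ∈ C, ∃ p ∈ U, p.2 = c) :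
    1 ∈ URR n C L := by
  refine Finset.mem_filter.2 ⟨Finset.mem_sdiff.2 ⟨Finset.mem_Icc.2 ⟨le_refl 1, hn⟩,
    one_not_mem_C hA hs⟩, no_left_one hA hs⟩

lemma mem_colRows {c r : ℕ} : r ∈ colRows L U c ↔ (r, c) ∈ L ∪ U := by
  simp only [colRows, Finset.mem_image, Finset.mem_filter]
  constructor
  · rintro ⟨p, ⟨hp, h2⟩, h1⟩
    have : (r, c) = p := Prod.ext h1.symm h2.symm
    rwa [this]
  · intro h
    exact ⟨(r, c), ⟨h, rfl⟩, rfl⟩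

lemma col_ne {n : ℕ} {C : Finset ℕ} {L U : Finset (ℕ × ℕ)} (hA : IsAT n C L U) :
    ∀ p ∈ L ∪ U, p.2 ≠ n + 1 := by
  intro p hp
  have := Finset.mem_Icc.1 (hA.1 ((hA.2.2.1 p hp).2.2.1))
  omega

lemma detach_isAT {n : ℕ} {C : Finset ℕ} {L U : Finset (ℕ × ℕ)} (hA : IsAT (n+1) C L U) :
    IsAT n (C.erase (n+1)) (L.filter fun p => p.2 ≠ n+1) (U.filter fun p => p.2 ≠ n+1) := by
  obtain ⟨hC, hdis, hcell, hL, hU⟩ := hA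
  have hsub : (L.filter fun p => p.2 ≠ n+1) ∪ (U.filter fun p => p.2 ≠ n+1) ⊆ L ∪ U :=
    Finset.union_subset_union (Finset.filter_subset _ _) (Finset.filter_subset _ _)
  refine ⟨?_, hdis.mono (Finset.filter_subset _ _) (Finset.filter_subset _ _), ?_, ?_, ?_⟩
  · intro c hc
    rw [Finset.mem_erase] at hc
    have := Finset.mem_Icc.1 (hC hc.2)
    exact Finset.mem_Icc.2 ⟨this.1, by omega⟩
  · intro p hp
    have hne : p.2 ≠ n + 1 := by
      rcases Finset.mem_union.1 hp with h | h <;> exact (Finset.mem_filter.1 h).2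
    have hp' : p ∈ L ∪ U := hsub hp
    obtain ⟨h1, h2, h3, h4⟩ := hcell p hp'
    have hi1 := Finset.mem_Icc.1 h1
    have hi2 := Finset.mem_Icc.1 (hC h3)
    refine ⟨Finset.mem_Icc.2 ⟨hi1.1, by omega⟩, fun h => h2 (Finset.mem_of_mem_erase h),
      Finset.mem_erase.2 ⟨hne, h3⟩, h4⟩
  · intro p hp c' hgt hm
    exact hL p (Finset.filter_subset _ L hp) c' hgt (hsub hm)
  · intro p hp r' hlt hm
    exact hU p (Finset.filter_subset _ U hp) r' hlt (hsub hm)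

lemma detach_star {n : ℕ} {C : Finset ℕ} {L U : Finset (ℕ × ℕ)}
    (hs : ∀ c ∈ C, ∃ p ∈ U, p.2 = c) :
    ∀ c ∈ C.erase (n+1), ∃ p ∈ U.filter (fun p => p.2 ≠ n+1), p.2 = c := by
  intro c hc
  rw [Finset.mem_erase] at hc
  obtain ⟨p, hp, h2⟩ := hs c hc.2
  exact ⟨p, Finset.mem_filter.2 ⟨hp, by rw [h2]; exact hc.1⟩, h2⟩

lemma detach_W_subset {n : ℕ} {C : Finset ℕ} {L U : Finset (ℕ × ℕ)} (hA : IsAT (n+1) C L U) :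
    colRows L U (n+1) ⊆ URR n (C.erase (n+1)) (L.filter fun p => p.2 ≠ n+1) := by
  intro r hr
  have hrc : (r, n+1) ∈ L ∪ U := mem_colRows.1 hr
  obtain ⟨h1, h2, h3, h4⟩ := hA.2.2.1 _ hrc
  have hi1 := Finset.mem_Icc.1 h1
  have h4' : r < n + 1 := h4
  refine Finset.mem_filter.2 ⟨Finset.mem_sdiff.2 ⟨Finset.mem_Icc.2 ⟨hi1.1, by omega⟩,
    fun h => h2 (Finset.mem_of_mem_erase h)⟩, ?_⟩
  intro p hp hp1
  rw [Finset.mem_filter] at hp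
  have hc2 := Finset.mem_Icc.1 (hA.1 ((hA.2.2.1 p (Finset.mem_union_left _ hp.1)).2.2.1))
  exact hA.2.2.2.1 p hp.1 (n+1) (by omega) (by rw [hp1]; exact hrc)

lemma filters_id_of_not_mem {n : ℕ} {C : Finset ℕ} {L U : Finset (ℕ × ℕ)}
    (hA : IsAT (n+1) C L U) (h : (n+1) ∉ C) :
    C.erase (n+1) = C ∧ L.filter (fun p => p.2 ≠ n+1) = L ∧
      U.filter (fun p => p.2 ≠ n+1) = U ∧ colRows L U (n+1) = ∅ := by
  have key : ∀ p ∈ L ∪ U, p.2 ≠ n+1 := by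
    intro p hp he
    exact h (he ▸ (hA.2.2.1 p hp).2.2.1)
  refine ⟨Finset.erase_eq_of_notMem h,
    Finset.filter_true_of_mem (fun p hp => key p (Finset.mem_union_left _ hp)),
    Finset.filter_true_of_mem (fun p hp => key p (Finset.mem_union_right _ hp)), ?_⟩
  rw [Finset.eq_empty_iff_forall_notMem]
  intro r hr
  exact key _ (mem_colRows.1 hr) rfl

lemma filters_id_level {n : ℕ} {C : Finset ℕ} {L U : Finset (ℕ × ℕ)} (hA : IsAT n C L U) :
    L.filter (fun p => p.2 ≠ n+1) = L ∧ U.filter (fun p => p.2 ≠ n+1) = U ∧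
      colRows L U (n+1) = ∅ := by
  have hc := col_ne hA
  refine ⟨Finset.filter_true_of_mem (fun p hp => hc p (Finset.mem_union_left _ hp)),
    Finset.filter_true_of_mem (fun p hp => hc p (Finset.mem_union_right _ hp)), ?_⟩
  rw [Finset.eq_empty_iff_forall_notMem]
  intro r hr
  exact hc _ (mem_colRows.1 hr) rfl

/-- glue a new leftmost column `n+1` with arrows in rows `W` (up arrow in the
topmost such row), or a new bottom empty row if `W = ∅`. -/
noncomputable def attachAT (n : ℕ) (T : ATT) (W : Finset ℕ) : ATT :=
  if h : W = ∅ then T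
  else
    (insert (n+1) T.1,
     T.2.1 ∪ (W.erase (W.min' (Finset.nonempty_iff_ne_empty.2 h))).image (fun r => (r, n+1)),
     insert (W.min' (Finset.nonempty_iff_ne_empty.2 h), n+1) T.2.2)

variable {n : ℕ} {C : Finset ℕ} {L U : Finset (ℕ × ℕ)} {W : Finset ℕ}

lemma URR_unpack (hW : W ⊆ URR n C L) :
    ∀ r ∈ W, (1 ≤ r ∧ r ≤ n) ∧ r ∉ C ∧ ∀ p ∈ L, p.1 ≠ r := by
  intro r hr
  have h1 := Finset.mem_filter.1 (hW hr)
  have h2 := Finset.mem_sdiff.1 h1.1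
  exact ⟨Finset.mem_Icc.1 h2.1, h2.2, h1.2⟩

lemma attach_isAT (hA : IsAT n C L U) (hW : W ⊆ URR n C L) (hne : W.Nonempty) :
    IsAT (n+1) (insert (n+1) C)
      (L ∪ (W.erase (W.min' hne)).image (fun r => (r, n+1)))
      (insert (W.min' hne, n+1) U) := by
  set u := W.min' hne with hu
  have huW : u ∈ W := W.min'_mem hne
  have hWrow := URR_unpack hW
  have hcolne := col_ne hA
  refine ⟨?_, ?_, ?_, ?_, ?_⟩
  · refine Finset.insert_subset_iff.2 ⟨Finset.mem_Icc.2 ⟨by omega, le_refl _⟩, fun c hc => ?_⟩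
    have := Finset.mem_Icc.1 (hA.1 hc)
    exact Finset.mem_Icc.2 ⟨this.1, by omega⟩
  · rw [Finset.disjoint_left]
    intro p hp hq
    rcases Finset.mem_union.1 hp with hpL | hpI
    · rcases Finset.mem_insert.1 hq with he | hqU
      · exact hcolne p (Finset.mem_union_left _ hpL) (by rw [he])
      · exact Finset.disjoint_left.1 hA.2.1 hpL hqU
    · obtain ⟨r, hr, hfr⟩ := Finset.mem_image.1 hpI
      rcases Finset.mem_insert.1 hq with he | hqU
      · rw [he] at hfr
        have : r = u := congrArg Prod.fst hfr
        exact (Finset.mem_erase.1 hr).1 this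
      · exact hcolne p (Finset.mem_union_right _ hqU) (by rw [← hfr])
  · intro p hp
    have hsplit : p ∈ L ∪ U ∨ (p.1 ∈ W ∧ p.2 = n+1) := by
      rcases Finset.mem_union.1 hp with h | h
      · rcases Finset.mem_union.1 h with h' | h'
        · exact Or.inl (Finset.mem_union_left _ h')
        · obtain ⟨r, hr, hfr⟩ := Finset.mem_image.1 h'
          right
          rw [← hfr]
          exact ⟨Finset.mem_of_mem_erase hr, rfl⟩
      · rcases Finset.mem_insert.1 h with h' | h'
        · right
          rw [h']
          exact ⟨huW, rfl⟩
        · exact Or.inl (Finset.mem_union_right _ h')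
    rcases hsplit with hold | ⟨hw1, hw2⟩
    · obtain ⟨h1, h2, h3, h4⟩ := hA.2.2.1 p hold
      have hi := Finset.mem_Icc.1 h1
      refine ⟨Finset.mem_Icc.2 ⟨hi.1, by omega⟩, ?_, Finset.mem_insert_of_mem h3, h4⟩
      intro hmem
      rcases Finset.mem_insert.1 hmem with he | hmc
      · omega
      · exact h2 hmc
    · obtain ⟨hi, hnc, _⟩ := hWrow p.1 hw1
      refine ⟨Finset.mem_Icc.2 ⟨hi.1, by omega⟩, ?_,
        by rw [hw2]; exact Finset.mem_insert_self _ _, by omega⟩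
      intro hmem
      rcases Finset.mem_insert.1 hmem with he | hmc
      · omega
      · exact hnc hmc
  · intro p hp c' hgt hm
    rcases Finset.mem_union.1 hp with hpL | hpI
    · rcases Finset.mem_union.1 hm with h | h
      · rcases Finset.mem_union.1 h with h' | h'
        · exact hA.2.2.2.1 p hpL c' hgt (Finset.mem_union_left _ h')
        · obtain ⟨r, hr, hfr⟩ := Finset.mem_image.1 h'
          have hr1 : r = p.1 := congrArg Prod.fst hfr
          exact (hWrow p.1 (hr1 ▸ Finset.mem_of_mem_erase hr)).2.2 p hpL rfl
      · rcases Finset.mem_insert.1 h with h' | h'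
        · have hpu : p.1 = u := congrArg Prod.fst h'
          exact (hWrow p.1 (by rw [hpu]; exact huW)).2.2 p hpL rfl
        · exact hA.2.2.2.1 p hpL c' hgt (Finset.mem_union_right _ h')
    · obtain ⟨r, hr, hfr⟩ := Finset.mem_image.1 hpI
      have hp2 : p.2 = n+1 := by rw [← hfr]
      rcases Finset.mem_union.1 hm with h | h
      · rcases Finset.mem_union.1 h with h' | h'
        · have hcle : c' ≤ n :=
            (Finset.mem_Icc.1 (hA.1 ((hA.2.2.1 _ (Finset.mem_union_left _ h')).2.2.1))).2
          omega
        · obtain ⟨r', hr', hfr'⟩ := Finset.mem_image.1 h'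
          have : (n : ℕ) + 1 = c' := congrArg Prod.snd hfr'
          omega
      · rcases Finset.mem_insert.1 h with h' | h'
        · have : c' = n + 1 := congrArg Prod.snd h'
          omega
        · have hcle : c' ≤ n :=
            (Finset.mem_Icc.1 (hA.1 ((hA.2.2.1 _ (Finset.mem_union_right _ h')).2.2.1))).2
          omega
  · intro p hp r' hlt hm
    rcases Finset.mem_insert.1 hp with he | hpU
    · have hp1 : p.1 = u := by rw [he]
      rcases Finset.mem_union.1 hm with h | h
      · rcases Finset.mem_union.1 h with h' | h'
        · have h2 : p.2 ∈ C := (hA.2.2.1 _ (Finset.mem_union_left _ h')).2.2.1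
          have h3 := (Finset.mem_Icc.1 (hA.1 h2)).2
          have hp2 : p.2 = n+1 := by rw [he]
          omega
        · obtain ⟨r'', hr'', hfr''⟩ := Finset.mem_image.1 h'
          have h1 : r'' = r' := congrArg Prod.fst hfr''
          have h2 : u ≤ r'' := W.min'_le _ (Finset.mem_of_mem_erase hr'')
          omega
      · rcases Finset.mem_insert.1 h with h' | h'
        · have : r' = u := congrArg Prod.fst h'
          omega
        · have h2 : p.2 ∈ C := (hA.2.2.1 _ (Finset.mem_union_right _ h')).2.2.1
          have h3 := (Finset.mem_Icc.1 (hA.1 h2)).2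
          have hp2 : p.2 = n+1 := by rw [he]
          omega
    · have hple : p.2 ≤ n :=
        (Finset.mem_Icc.1 (hA.1 ((hA.2.2.1 p (Finset.mem_union_right _ hpU)).2.2.1))).2
      rcases Finset.mem_union.1 hm with h | h
      · rcases Finset.mem_union.1 h with h' | h'
        · exact hA.2.2.2.2 p hpU r' hlt (Finset.mem_union_left _ h')
        · obtain ⟨r'', hr'', hfr''⟩ := Finset.mem_image.1 h'
          have : (n : ℕ) + 1 = p.2 := congrArg Prod.snd hfr''
          omega
      · rcases Finset.mem_insert.1 h with h' | h'
        · have : p.2 = n+1 := congrArg Prod.snd h'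
          omega
        · exact hA.2.2.2.2 p hpU r' hlt (Finset.mem_union_right _ h')

lemma attach_star (hs : ∀ c ∈ C, ∃ p ∈ U, p.2 = c) (hne : W.Nonempty) :
    ∀ c ∈ insert (n+1) C, ∃ p ∈ insert (W.min' hne, n+1) U, p.2 = c := by
  intro c hc
  rcases Finset.mem_insert.1 hc with he | hc'
  · exact ⟨(W.min' hne, n+1), Finset.mem_insert_self _ _, he.symm⟩
  · obtain ⟨p, hp, h2⟩ := hs c hc'
    exact ⟨p, Finset.mem_insert_of_mem hp, h2⟩

lemma attach_arrows (hne : W.Nonempty) :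
    (L ∪ (W.erase (W.min' hne)).image (fun r => (r, n+1))) ∪
        insert (W.min' hne, n+1) U
      = (L ∪ U) ∪ W.image (fun r => (r, n+1)) := by
  have huW : W.min' hne ∈ W := W.min'_mem hne
  ext p
  simp only [Finset.mem_union, Finset.mem_insert, Finset.mem_image, Finset.mem_erase]
  constructor
  · rintro ((h | ⟨r, ⟨hru, hrW⟩, hfr⟩) | he | h)
    · exact Or.inl (Or.inl h)
    · exact Or.inr ⟨r, hrW, hfr⟩
    · exact Or.inr ⟨W.min' hne, huW, he.symm⟩
    · exact Or.inl (Or.inr h)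
  · rintro ((h | h) | ⟨r, hrW, hfr⟩)
    · exact Or.inl (Or.inl h)
    · exact Or.inr (Or.inr h)
    · by_cases hru : r = W.min' hne
      · exact Or.inr (Or.inl (by rw [← hfr, hru]))
      · exact Or.inl (Or.inr ⟨r, ⟨hru, hrW⟩, hfr⟩)

lemma attach_detach (hA : IsAT (n+1) C L U) (hs : ∀ c ∈ C, ∃ p ∈ U, p.2 = c) :
    attachAT n (C.erase (n+1), L.filter (fun p => p.2 ≠ n+1), U.filter (fun p => p.2 ≠ n+1))
      (colRows L U (n+1)) = (C, L, U) := by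
  by_cases hc : (n+1) ∈ C
  · obtain ⟨q, hq, hq2⟩ := hs (n+1) hc
    have hqpair : (q.1, n+1) = q := Prod.ext rfl hq2.symm
    have hqW : q.1 ∈ colRows L U (n+1) :=
      mem_colRows.2 (by rw [hqpair]; exact Finset.mem_union_right _ hq)
    have hWne : colRows L U (n+1) ≠ ∅ := Finset.ne_empty_of_mem hqW
    have hne := Finset.nonempty_iff_ne_empty.2 hWne
    simp only [attachAT]
    rw [dif_neg hWne]
    have hmin : (colRows L U (n+1)).min' (Finset.nonempty_iff_ne_empty.2 hWne) = q.1 := by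
      refine le_antisymm (Finset.min'_le _ _ hqW) (Finset.le_min' _ _ _ ?_)
      intro r hr
      by_contra hcon
      push_neg at hcon
      refine hA.2.2.2.2 q hq r hcon ?_
      rw [hq2]
      exact mem_colRows.1 hr
    have eU : insert (q.1, n+1) (U.filter fun p => p.2 ≠ n+1) = U := by
      ext p
      simp only [Finset.mem_insert, Finset.mem_filter]
      constructor
      · rintro (he | ⟨hp, _⟩)
        · rw [he, hqpair]; exact hq
        · exact hp
      · intro hp
        by_cases h2 : p.2 = n+1
        · left
          have hpq : p = q := up_unique hA p hp q hq (by rw [h2, hq2])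
          rw [hpq]
          exact hqpair.symm
        · right; exact ⟨hp, h2⟩
    have eL : (L.filter fun p => p.2 ≠ n+1) ∪
        ((colRows L U (n+1)).erase q.1).image (fun r => (r, n+1)) = L := by
      ext p
      simp only [Finset.mem_union, Finset.mem_filter, Finset.mem_image, Finset.mem_erase]
      constructor
      · rintro (⟨hp, _⟩ | ⟨r, ⟨hru, hrW⟩, hfr⟩)
        · exact hp
        · have hm := mem_colRows.1 hrW
          rcases Finset.mem_union.1 hm with h | h
          · rwa [← hfr]
          · exfalso
            have heq : (r, n+1) = q := up_unique hA _ h q hq (by rw [hq2])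
            exact hru (congrArg Prod.fst heq)
      · intro hp
        by_cases h2 : p.2 = n+1
        · right
          refine ⟨p.1, ⟨?_, mem_colRows.2 (by
              rw [show (p.1, n+1) = p from Prod.ext rfl h2.symm]
              exact Finset.mem_union_left _ hp)⟩, Prod.ext rfl h2.symm⟩
          intro he
          have hpq : p = q := Prod.ext he (by rw [h2, hq2])
          exact Finset.disjoint_left.1 hA.2.1 hp (hpq ▸ hq)
        · left; exact ⟨hp, h2⟩
    show (insert (n+1) (C.erase (n+1)), _, _) = (C, L, U)
    rw [hmin, Finset.insert_erase hc, eL, eU]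
  · obtain ⟨e1, e2, e3, e4⟩ := filters_id_of_not_mem hA hc
    simp only [attachAT]
    rw [e4, dif_pos rfl, e1, e2, e3]

lemma detach_attach {T : ATT} (hA : IsAT n T.1 T.2.1 T.2.2) :
    ((attachAT n T W).1.erase (n+1),
     (attachAT n T W).2.1.filter (fun p => p.2 ≠ n+1),
     (attachAT n T W).2.2.filter (fun p => p.2 ≠ n+1)) = T
    ∧ colRows (attachAT n T W).2.1 (attachAT n T W).2.2 (n+1) = W := by
  obtain ⟨C, L, U⟩ := T
  have hcol := col_ne hA
  by_cases h0 : W = ∅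
  · subst h0
    simp only [attachAT, dif_pos]
    obtain ⟨e2, e3, e4⟩ := filters_id_level hA
    have e1 : C.erase (n+1) = C := Finset.erase_eq_of_notMem (fun h => by
      have := Finset.mem_Icc.1 (hA.1 h); omega)
    rw [e1, e2, e3, e4]
    exact ⟨rfl, rfl⟩
  · have hne := Finset.nonempty_iff_ne_empty.2 h0
    simp only [attachAT]
    rw [dif_neg h0]
    set u := W.min' (Finset.nonempty_iff_ne_empty.2 h0) with hu
    have huW : u ∈ W := W.min'_mem _
    have hnc : (n+1) ∉ C := fun h => by
      have := Finset.mem_Icc.1 (hA.1 h); omega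
    constructor
    · refine Prod.ext ?_ (Prod.ext ?_ ?_)
      · show (insert (n+1) C).erase (n+1) = C
        exact Finset.erase_insert hnc
      · show ((L ∪ (W.erase u).image (fun r => (r, n+1))).filter (fun p => p.2 ≠ n+1) : Finset (ℕ × ℕ)) = L
        rw [Finset.filter_union]
        have hL : L.filter (fun p => p.2 ≠ n+1) = L :=
          Finset.filter_true_of_mem (fun p hp => hcol p (Finset.mem_union_left _ hp))
        have hI : ((W.erase u).image (fun r => (r, n+1))).filter (fun p => p.2 ≠ n+1) = ∅ := by
          rw [Finset.filter_eq_empty_iff]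
          intro p hp
          obtain ⟨r, _, hfr⟩ := Finset.mem_image.1 hp
          intro hcon
          exact hcon (by rw [← hfr])
        rw [hL, hI, Finset.union_empty]
      · show (insert (u, n+1) U).filter (fun p => p.2 ≠ n+1) = U
        rw [Finset.filter_insert, if_neg (by simp)]
        exact Finset.filter_true_of_mem (fun p hp => hcol p (Finset.mem_union_right _ hp))
    · show colRows (L ∪ (W.erase u).image (fun r => (r, n+1))) (insert (u, n+1) U) (n+1) = W
      ext r
      rw [mem_colRows]
      constructor
      · intro hm
        rcases Finset.mem_union.1 hm with h | h
        · rcases Finset.mem_union.1 h with h' | h'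
          · exact absurd rfl (hcol _ (Finset.mem_union_left _ h'))
          · obtain ⟨r', hr', hfr'⟩ := Finset.mem_image.1 h'
            have hrr : r' = r := congrArg Prod.fst hfr'
            exact Finset.mem_of_mem_erase (hrr ▸ hr')
        · rcases Finset.mem_insert.1 h with h' | h'
          · have hru : r = u := congrArg Prod.fst h'
            rw [hru]; exact huW
          · exact absurd rfl (hcol _ (Finset.mem_union_right _ h'))
      · intro hr
        by_cases hru : r = u
        · exact Finset.mem_union_right _ (Finset.mem_insert.2 (Or.inl (by rw [hru])))
        · exact Finset.mem_union_left _ (Finset.mem_union_right _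
            (Finset.mem_image.2 ⟨r, Finset.mem_erase.2 ⟨hru, hr⟩, rfl⟩))

lemma attach_top (hn : 1 ≤ n) (hA : IsAT n C L U) (hs : ∀ c ∈ C, ∃ p ∈ U, p.2 = c)
    (hW : W ⊆ URR n C L) (hne : W.Nonempty) :
    topA (n+1) (insert (n+1) C)
      (L ∪ (W.erase (W.min' hne)).image (fun r => (r, n+1)))
      (insert (W.min' hne, n+1) U)
    = topA n C L U + (if 1 ∈ W then 1 else 0) := by
  have hbig := attach_isAT hA hW hne
  have hsbig := attach_star (n := n) hs hne
  simp only [topA]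
  rw [topRow_one (by omega) hbig hsbig, topRow_one hn hA hs, attach_arrows hne]
  have hdisj : Disjoint ((L ∪ U).filter (fun p => p.1 = 1))
      ((W.image (fun r => (r, n+1))).filter (fun p => p.1 = 1)) := by
    rw [Finset.disjoint_left]
    intro p hp hq
    obtain ⟨r, _, hfr⟩ := Finset.mem_image.1 (Finset.mem_filter.1 hq).1
    exact col_ne hA p (Finset.mem_filter.1 hp).1 (by rw [← hfr])
  rw [Finset.filter_union, Finset.card_union_of_disjoint hdisj]
  congr 1
  have himg : (W.image (fun r => (r, n+1))).filter (fun p => p.1 = 1)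
      = (W.filter (fun r => r = 1)).image (fun r => (r, n+1)) := by
    ext p
    simp only [Finset.mem_filter, Finset.mem_image]
    constructor
    · rintro ⟨⟨r, hr, hfr⟩, h1⟩
      refine ⟨r, ⟨hr, ?_⟩, hfr⟩
      rw [← hfr] at h1; exact h1
    · rintro ⟨r, ⟨hr, h1⟩, hfr⟩
      exact ⟨⟨r, hr, hfr⟩, by rw [← hfr]; exact h1⟩
  rw [himg, Finset.card_image_of_injective _ (fun a b h => congrArg Prod.fst h)]
  by_cases h1 : 1 ∈ W
  · rw [if_pos h1]
    have hfe : W.filter (fun r => r = 1) = {1} := by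
      ext r
      simp only [Finset.mem_filter, Finset.mem_singleton]
      exact ⟨fun h => h.2, fun h => ⟨by rw [h]; exact h1, h⟩⟩
    rw [hfe]; rfl
  · rw [if_neg h1]
    have hfe : W.filter (fun r => r = 1) = ∅ := by
      rw [Finset.filter_eq_empty_iff]
      intro r hr he
      exact h1 (he ▸ hr)
    rw [hfe]; rfl

lemma attach_top_empty (hn : 1 ≤ n) (hA : IsAT n C L U)
    (hs : ∀ c ∈ C, ∃ p ∈ U, p.2 = c) :
    topA (n+1) C L U = topA n C L U := by
  simp only [topA]
  rw [topRow_one (by omega) (isAT_mono hA) hs, topRow_one hn hA hs]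

lemma attach_urr (hne : W.Nonempty) :
    URR (n+1) (insert (n+1) C) (L ∪ (W.erase (W.min' hne)).image (fun r => (r, n+1)))
      = URR n C L \ (W.erase (W.min' hne)) := by
  ext r
  constructor
  · intro hr
    obtain ⟨hr1, hr2⟩ := Finset.mem_filter.1 hr
    obtain ⟨hrI, hrC⟩ := Finset.mem_sdiff.1 hr1
    have hIcc := Finset.mem_Icc.1 hrI
    have hrn : r ≠ n+1 := fun he => hrC (by rw [he]; exact Finset.mem_insert_self _ _)
    have hrC' : r ∉ C := fun h => hrC (Finset.mem_insert_of_mem h)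
    refine Finset.mem_sdiff.2 ⟨Finset.mem_filter.2 ⟨Finset.mem_sdiff.2
      ⟨Finset.mem_Icc.2 ⟨hIcc.1, by omega⟩, hrC'⟩, ?_⟩, ?_⟩
    · intro p hp
      exact hr2 p (Finset.mem_union_left _ hp)
    · intro hrW
      exact hr2 _ (Finset.mem_union_right _ (Finset.mem_image.2 ⟨r, hrW, rfl⟩)) rfl
  · intro hr
    obtain ⟨hrU, hrW⟩ := Finset.mem_sdiff.1 hr
    obtain ⟨hr1, hr2⟩ := Finset.mem_filter.1 hrU
    obtain ⟨hrI, hrC⟩ := Finset.mem_sdiff.1 hr1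
    have hIcc := Finset.mem_Icc.1 hrI
    refine Finset.mem_filter.2 ⟨Finset.mem_sdiff.2
      ⟨Finset.mem_Icc.2 ⟨hIcc.1, by omega⟩, ?_⟩, ?_⟩
    · intro h
      rcases Finset.mem_insert.1 h with he | h'
      · omega
      · exact hrC h'
    · intro p hp hp1
      rcases Finset.mem_union.1 hp with h | h
      · exact hr2 p h hp1
      · obtain ⟨r', hr', hfr'⟩ := Finset.mem_image.1 h
        have hrr : r' = p.1 := congrArg Prod.fst hfr'
        exact hrW (by rw [← hp1, ← hrr]; exact hr')

lemma attach_urr_empty (hA : IsAT n C L U) :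
    URR (n+1) C L = insert (n+1) (URR n C L) := by
  ext r
  simp only [URR, Finset.mem_insert, Finset.mem_filter, Finset.mem_sdiff, Finset.mem_Icc]
  constructor
  · rintro ⟨⟨⟨h1, h2⟩, h3⟩, h4⟩
    by_cases he : r = n+1
    · exact Or.inl he
    · exact Or.inr ⟨⟨⟨h1, by omega⟩, h3⟩, h4⟩
  · rintro (he | ⟨⟨⟨h1, h2⟩, h3⟩, h4⟩)
    · subst he
      refine ⟨⟨⟨by omega, le_refl _⟩, fun h => ?_⟩, fun p hp => ?_⟩
      · have := Finset.mem_Icc.1 (hA.1 h); omega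
      · have := Finset.mem_Icc.1 (hA.2.2.1 p (Finset.mem_union_left _ hp)).1
        omega
    · exact ⟨⟨⟨h1, by omega⟩, h3⟩, h4⟩

lemma sum_powerset_pow_card (b : ℤ) (S : Finset ℕ) :
    ∑ W ∈ S.powerset, b ^ (S.card - W.card) = (b + 1) ^ S.card := by
  induction S using Finset.induction_on with
  | empty => simp
  | @insert x s hx ih =>
    rw [Finset.sum_powerset_insert hx]
    have h1 : ∀ W ∈ s.powerset, b ^ ((insert x s).card - W.card)
        = b * b ^ (s.card - W.card) := by
      intro W hW
      have hle := Finset.card_le_card (Finset.mem_powerset.1 hW)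
      rw [Finset.card_insert_of_notMem hx,
        show s.card + 1 - W.card = (s.card - W.card) + 1 by omega, pow_succ]
      ring
    have h2 : ∀ W ∈ s.powerset, b ^ ((insert x s).card - (insert x W).card)
        = b ^ (s.card - W.card) := by
      intro W hW
      have hxW : x ∉ W := fun h => hx (Finset.mem_powerset.1 hW h)
      rw [Finset.card_insert_of_notMem hx, Finset.card_insert_of_notMem hxW]
      congr 1
      omega
    rw [Finset.sum_congr rfl h1, Finset.sum_congr rfl h2, ← Finset.mul_sum, ih,
      Finset.card_insert_of_notMem hx, pow_succ]
    ring

lemma sum_powerset_mark (a b : ℤ) (S : Finset ℕ) (x : ℕ) (hx : x ∈ S) :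
    ∑ W ∈ S.powerset, (if x ∈ W then a else 1) * b ^ (S.card - W.card)
      = (a + b) * (b + 1) ^ (S.card - 1) := by
  have hS : S = insert x (S.erase x) := (Finset.insert_erase hx).symm
  have hx' : x ∉ S.erase x := Finset.notMem_erase x S
  rw [hS, Finset.sum_powerset_insert hx']
  have h1 : ∀ W ∈ (S.erase x).powerset,
      (if x ∈ W then a else 1) * b ^ ((insert x (S.erase x)).card - W.card)
        = b * b ^ ((S.erase x).card - W.card) := by
    intro W hW
    have hsub := Finset.mem_powerset.1 hW
    have hxW : x ∉ W := fun h => hx' (hsub h)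
    have hle := Finset.card_le_card hsub
    rw [if_neg hxW, Finset.card_insert_of_notMem hx',
      show (S.erase x).card + 1 - W.card = ((S.erase x).card - W.card) + 1 by omega, pow_succ]
    ring
  have h2 : ∀ W ∈ (S.erase x).powerset,
      (if x ∈ insert x W then a else 1)
          * b ^ ((insert x (S.erase x)).card - (insert x W).card)
        = a * b ^ ((S.erase x).card - W.card) := by
    intro W hW
    have hxW : x ∉ W := fun h => hx' (Finset.mem_powerset.1 hW h)
    rw [if_pos (Finset.mem_insert_self _ _), Finset.card_insert_of_notMem hx',
      Finset.card_insert_of_notMem hxW]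
    congr 2
    omega
  rw [Finset.sum_congr rfl h1, Finset.sum_congr rfl h2, ← Finset.mul_sum, ← Finset.mul_sum,
    sum_powerset_pow_card, Finset.card_insert_of_notMem hx', Nat.add_sub_cancel]
  ring

lemma main_sum (m : ℕ) : ∀ a b : ℤ,
    ∑ T ∈ ATstar (m+1), a ^ topA (m+1) T.1 T.2.1 T.2.2 * b ^ (urrA (m+1) T.1 T.2.1 - 1)
      = (ascPochhammer ℤ m).eval (a + b) := by
  induction m with
  | zero =>
    intro a b
    have hset : ATstar 1
        = {((∅ : Finset ℕ), (∅ : Finset (ℕ × ℕ)), (∅ : Finset (ℕ × ℕ)))} := by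
      ext T
      rw [mem_ATstar_iff, Finset.mem_singleton]
      constructor
      · rintro ⟨hA, hs⟩
        have hC : T.1 = ∅ := by
          rw [Finset.eq_empty_iff_forall_notMem]
          intro c hc
          have := Finset.mem_Icc.1 (hA.1 hc)
          have h1 : c = 1 := by omega
          exact one_not_mem_C hA hs (h1 ▸ hc)
        have hLU : ∀ p ∈ T.2.1 ∪ T.2.2, False := by
          intro p hp
          have h3 := (hA.2.2.1 p hp).2.2.1
          rw [hC] at h3
          exact absurd h3 (Finset.notMem_empty _)
        have hL : T.2.1 = ∅ := Finset.eq_empty_iff_forall_notMem.2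
          (fun p hp => hLU p (Finset.mem_union_left _ hp))
        have hU : T.2.2 = ∅ := Finset.eq_empty_iff_forall_notMem.2
          (fun p hp => hLU p (Finset.mem_union_right _ hp))
        exact Prod.ext hC (Prod.ext hL hU)
      · intro h
        subst h
        refine ⟨⟨Finset.empty_subset _, ?_, ?_, ?_, ?_⟩, ?_⟩ <;> simp
    rw [hset, Finset.sum_singleton]
    have htop : topA 1 (∅ : Finset ℕ) ∅ ∅ = 0 := by simp [topA]
    have hurr : urrA 1 (∅ : Finset ℕ) (∅ : Finset (ℕ × ℕ)) = 1 := by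
      simp [urrA, Finset.Icc_self]
    rw [htop, hurr]
    simp
  | succ m ih =>
    intro a b
    have h1n : 1 ≤ m + 1 := by omega
    have key :
        ∑ x ∈ (ATstar (m+1)).sigma (fun T' => (URR (m+1) T'.1 T'.2.1).powerset),
            a ^ topA (m+1) x.1.1 x.1.2.1 x.1.2.2 * ((if 1 ∈ x.2 then a else 1)
              * b ^ ((URR (m+1) x.1.1 x.1.2.1).card - x.2.card))
        = ∑ T ∈ ATstar (m+1+1),
            a ^ topA (m+1+1) T.1 T.2.1 T.2.2 * b ^ (urrA (m+1+1) T.1 T.2.1 - 1) := by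
      refine Finset.sum_nbij' (fun x => attachAT (m+1) x.1 x.2)
        (fun T => ⟨(T.1.erase (m+1+1), T.2.1.filter (fun p => p.2 ≠ m+1+1),
            T.2.2.filter (fun p => p.2 ≠ m+1+1)), colRows T.2.1 T.2.2 (m+1+1)⟩)
        ?_ ?_ ?_ ?_ ?_
      · intro x hx
        obtain ⟨hT, hWp⟩ := Finset.mem_sigma.1 hx
        obtain ⟨hA, hs⟩ := mem_ATstar_iff.1 hT
        have hW := Finset.mem_powerset.1 hWp
        by_cases h0 : x.2 = ∅
        · simp only [attachAT]
          rw [dif_pos h0]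
          exact mem_ATstar_iff.2 ⟨isAT_mono hA, hs⟩
        · simp only [attachAT]
          rw [dif_neg h0]
          exact mem_ATstar_iff.2 ⟨attach_isAT hA hW (Finset.nonempty_iff_ne_empty.2 h0),
            attach_star hs (Finset.nonempty_iff_ne_empty.2 h0)⟩
      · intro T hT
        obtain ⟨hA, hs⟩ := mem_ATstar_iff.1 hT
        exact Finset.mem_sigma.2 ⟨mem_ATstar_iff.2 ⟨detach_isAT hA, detach_star (L := T.2.1) hs⟩,
          Finset.mem_powerset.2 (detach_W_subset hA)⟩
      · intro x hx
        obtain ⟨T', W⟩ := x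
        obtain ⟨hT, hWp⟩ := Finset.mem_sigma.1 hx
        obtain ⟨hA, hs⟩ := mem_ATstar_iff.1 hT
        obtain ⟨e1, e2⟩ := detach_attach (W := W) hA
        dsimp only
        rw [e1, e2]
      · intro T hT
        obtain ⟨C, L, U⟩ := T
        obtain ⟨hA, hs⟩ := mem_ATstar_iff.1 hT
        dsimp only
        exact attach_detach hA hs
      · intro x hx
        obtain ⟨⟨C, L, U⟩, W⟩ := x
        obtain ⟨hT, hWp⟩ := Finset.mem_sigma.1 hx
        obtain ⟨hA, hs⟩ := mem_ATstar_iff.1 hT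
        have hW := Finset.mem_powerset.1 hWp
        have hcard : W.card ≤ (URR (m+1) C L).card := Finset.card_le_card hW
        dsimp only
        by_cases h0 : W = ∅
        · subst h0
          simp only [attachAT, dif_pos]
          rw [attach_top_empty h1n hA hs, urrA_eq_card, attach_urr_empty hA,
            Finset.card_insert_of_notMem (fun h => by
              have := Finset.mem_Icc.1 (Finset.mem_sdiff.1 (Finset.mem_filter.1 h).1).1
              omega),
            Nat.add_sub_cancel]
          simp
        · have hne := Finset.nonempty_iff_ne_empty.2 h0
          simp only [attachAT]
          rw [dif_neg h0]
          rw [attach_top h1n hA hs hW (Finset.nonempty_iff_ne_empty.2 h0)]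
          have hUcard : urrA (m+1+1) (insert (m+1+1) C)
              (L ∪ (W.erase (W.min' (Finset.nonempty_iff_ne_empty.2 h0))).image
                (fun r => (r, m+1+1)))
              = (URR (m+1) C L).card - (W.card - 1) := by
            rw [urrA_eq_card, attach_urr (Finset.nonempty_iff_ne_empty.2 h0),
              Finset.card_sdiff_of_subset ((Finset.erase_subset _ _).trans hW),
              Finset.card_erase_of_mem (W.min'_mem _)]
          rw [hUcard]
          have hWpos : 1 ≤ W.card := Finset.card_pos.2 hne
          rw [show (URR (m+1) C L).card - (W.card - 1) - 1
              = (URR (m+1) C L).card - W.card by omega]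
          by_cases h1 : 1 ∈ W
          · rw [if_pos h1, if_pos h1]
            ring
          · rw [if_neg h1, if_neg h1]
            ring
    rw [← key, Finset.sum_sigma]
    have inner : ∀ T' ∈ ATstar (m+1),
        (∑ W ∈ (URR (m+1) T'.1 T'.2.1).powerset,
          a ^ topA (m+1) T'.1 T'.2.1 T'.2.2 * ((if 1 ∈ W then a else 1)
            * b ^ ((URR (m+1) T'.1 T'.2.1).card - W.card)))
        = (a + b) * (a ^ topA (m+1) T'.1 T'.2.1 T'.2.2
            * (b+1) ^ (urrA (m+1) T'.1 T'.2.1 - 1)) := by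
      intro T' hT'
      obtain ⟨hA, hs⟩ := mem_ATstar_iff.1 hT'
      rw [← Finset.mul_sum, sum_powerset_mark a b _ 1 (one_mem_URR h1n hA hs), urrA_eq_card]
      ring
    rw [Finset.sum_congr rfl inner, ← Finset.mul_sum, ih a (b+1), ascPochhammer_succ_left]
    simp only [Polynomial.eval_mul, Polynomial.eval_comp, Polynomial.eval_add,
      Polynomial.eval_X, Polynomial.eval_one]
    rw [show a + (b + 1) = a + b + 1 from by ring]

end AuxAT

/-- for `n ≥ 1`,
`∑_{T ∈ 𝒜𝒯*_n} a^{top T} b^{urr T - 1} = (a+b)_{n-1}`. -/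
theorem atstar_enumeration (n : ℕ) (hn : 1 ≤ n) (a b : ℤ) :
    ∑ T ∈ ATstar n, a ^ topA n T.1 T.2.1 T.2.2 * b ^ (urrA n T.1 T.2.1 - 1) =
      (ascPochhammer ℤ (n - 1)).eval (a + b) := by
  obtain ⟨m, rfl⟩ : ∃ m, n = m + 1 := ⟨n - 1, by omega⟩
  exact main_sum m a b
end

section
/- For n ≥ 3 and 3 ≤ i ≤ n, let M_{n,i} be the set of linked partitions of {1,...,n} in which vertex i is a destination and (i-1, i) is not an arc. Then the sum over τ in M_{n,i} of a^{one(τ)} b^{os(τ)-1} equals (i-3+a)·(a+b)_{n-2}. -/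
open Finset Polynomial
open scoped Classical

/-! ### Auxiliary machinery for `lp_M_enumeration` -/

section LPaux

/-- extend a linked partition of `[n]` by vertex `n+1`, with incoming arc from
`k` (no arc if `k = 0`). -/
noncomputable def extLP (n : ℕ) (A : Finset (ℕ × ℕ)) (k : ℕ) : Finset (ℕ × ℕ) :=
  if k = 0 then A else insert (k, n + 1) A

lemma mem_LP {n : ℕ} {A : Finset (ℕ × ℕ)} : A ∈ LP n ↔ IsLP n A := by
  simp only [LP, Finset.mem_filter, Finset.mem_powerset]
  constructor
  · exact fun h => h.2
  · intro h
    refine ⟨fun p hp => ?_, h⟩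
    obtain ⟨h1, h2, h3⟩ := h.1 p hp
    exact Finset.mem_product.2 ⟨Finset.mem_Icc.2 ⟨h1, le_trans (le_of_lt h2) h3⟩,
      Finset.mem_Icc.2 ⟨le_trans h1 (le_of_lt h2), h3⟩⟩

lemma notmem_top {n : ℕ} {A : Finset (ℕ × ℕ)} (h : IsLP n A) (k : ℕ) :
    (k, n + 1) ∉ A := by
  intro hc
  have := (h.1 _ hc).2.2
  omega

lemma filter_ne_of_LP {n : ℕ} {A : Finset (ℕ × ℕ)} (h : IsLP n A) :
    A.filter (fun p => p.2 ≠ n + 1) = A := by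
  apply Finset.filter_true_of_mem
  intro p hp
  have := (h.1 p hp).2.2
  omega

lemma filter_eq_of_LP {n : ℕ} {A : Finset (ℕ × ℕ)} (h : IsLP n A) :
    A.filter (fun p => p.2 = n + 1) = ∅ := by
  apply Finset.filter_false_of_mem
  intro p hp
  have := (h.1 p hp).2.2
  omega

lemma filter_top_eq {n : ℕ} {A : Finset (ℕ × ℕ)} (h : IsLP (n + 1) A) :
    A.filter (fun p => p.2 = n + 1) = ∅ ∨
      ∃ k, 1 ≤ k ∧ k ≤ n ∧ A.filter (fun p => p.2 = n + 1) = {(k, n + 1)} := by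
  rcases (A.filter (fun p => p.2 = n + 1)).eq_empty_or_nonempty with he | hne
  · exact Or.inl he
  · obtain ⟨p, hp⟩ := hne
    rw [Finset.mem_filter] at hp
    obtain ⟨hpA, hp2⟩ := hp
    obtain ⟨h1, h2, h3⟩ := h.1 p hpA
    refine Or.inr ⟨p.1, h1, by omega, ?_⟩
    ext q
    simp only [Finset.mem_filter, Finset.mem_singleton]
    constructor
    · rintro ⟨hqA, hq2⟩
      have h12 := h.2 q hqA p hpA (hq2.trans hp2.symm)
      rw [Prod.ext_iff]
      exact ⟨h12, hq2⟩
    · intro hq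
      subst hq
      refine ⟨?_, rfl⟩
      have hpe : p = (p.1, n + 1) := by
        rw [Prod.ext_iff]
        exact ⟨rfl, hp2⟩
      rwa [← hpe]

lemma extLP_mem {n : ℕ} {A : Finset (ℕ × ℕ)} (h : IsLP n A) {k : ℕ} (hk : k ≤ n) :
    IsLP (n + 1) (extLP n A k) := by
  unfold extLP
  by_cases h0 : k = 0
  · rw [if_pos h0]
    exact ⟨fun p hp => by have := h.1 p hp; omega, h.2⟩
  · rw [if_neg h0]
    constructor
    · intro p hp
      rcases Finset.mem_insert.1 hp with rfl | hp
      · simp only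
        omega
      · have := h.1 p hp; omega
    · intro p hp q hq hpq
      rcases Finset.mem_insert.1 hp with rfl | hp <;>
        rcases Finset.mem_insert.1 hq with rfl | hq
      · rfl
      · exfalso
        have hq2 := (h.1 q hq).2.2
        have hx : (n + 1 : ℕ) = q.2 := hpq
        omega
      · exfalso
        have hp2 := (h.1 p hp).2.2
        have hx : p.2 = (n + 1 : ℕ) := hpq
        omega
      · exact h.2 p hp q hq hpq

lemma reconstruct {n : ℕ} {A : Finset (ℕ × ℕ)} (h : IsLP (n + 1) A) :
    extLP n (A.filter (fun p => p.2 ≠ n + 1))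
      ((A.filter (fun p => p.2 = n + 1)).sup Prod.fst) = A := by
  rcases filter_top_eq h with he | ⟨k, hk1, hk2, hke⟩
  · rw [he, Finset.sup_empty, Nat.bot_eq_zero, extLP, if_pos rfl]
    apply Finset.filter_true_of_mem
    intro p hp hc
    have : p ∈ A.filter (fun p => p.2 = n + 1) := Finset.mem_filter.2 ⟨hp, hc⟩
    rw [he] at this
    exact absurd this (Finset.notMem_empty p)
  · rw [hke, Finset.sup_singleton]
    rw [extLP, if_neg (by omega)]
    ext q
    simp only [Finset.mem_insert, Finset.mem_filter]
    constructor
    · rintro (rfl | ⟨hq, _⟩)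
      · have : ((k, n+1) : ℕ × ℕ) ∈ A.filter (fun p => p.2 = n + 1) := by
          rw [hke]; exact Finset.mem_singleton_self _
        exact (Finset.mem_filter.1 this).1
      · exact hq
    · intro hq
      by_cases hq2 : q.2 = n + 1
      · left
        have : q ∈ A.filter (fun p => p.2 = n + 1) := Finset.mem_filter.2 ⟨hq, hq2⟩
        rw [hke, Finset.mem_singleton] at this
        exact this
      · exact Or.inr ⟨hq, hq2⟩

lemma decomp (n : ℕ) (f : Finset (ℕ × ℕ) → ℤ) :
    ∑ A ∈ LP (n + 1), f A =
      ∑ x ∈ (LP n) ×ˢ Finset.range (n + 1), f (extLP n x.1 x.2) := by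
  refine Finset.sum_nbij'
    (fun A => (A.filter (fun p => p.2 ≠ n + 1), (A.filter (fun p => p.2 = n + 1)).sup Prod.fst))
    (fun x => extLP n x.1 x.2) ?_ ?_ ?_ ?_ ?_
  · intro A hA
    have h := mem_LP.1 hA
    rw [Finset.mem_product]
    constructor
    · rw [mem_LP]
      constructor
      · intro p hp
        rw [Finset.mem_filter] at hp
        have := h.1 p hp.1
        have h2 := hp.2
        refine ⟨this.1, this.2.1, ?_⟩
        omega
      · intro p hp q hq hpq
        exact h.2 p (Finset.mem_of_mem_filter _ hp) q (Finset.mem_of_mem_filter _ hq) hpq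
    · rw [Finset.mem_range]
      rcases filter_top_eq h with he | ⟨k, hk1, hk2, hke⟩
      · rw [he]; simp
      · rw [hke, Finset.sup_singleton]
        omega
  · intro x hx
    rw [Finset.mem_product] at hx
    exact mem_LP.2 (extLP_mem (mem_LP.1 hx.1) (by have := Finset.mem_range.1 hx.2; omega))
  · intro A hA
    exact reconstruct (mem_LP.1 hA)
  · intro x hx
    rw [Finset.mem_product] at hx
    have h := mem_LP.1 hx.1
    have hk := Finset.mem_range.1 hx.2
    unfold extLP
    by_cases h0 : x.2 = 0
    · rw [if_pos h0, filter_ne_of_LP h, filter_eq_of_LP h, Finset.sup_empty,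
        Nat.bot_eq_zero, ← h0]
    · rw [if_neg h0, Finset.filter_insert, Finset.filter_insert,
        if_neg (show ¬(((x.2, n + 1) : ℕ × ℕ).2 ≠ n + 1) by simp),
        if_pos (show ((x.2, n + 1) : ℕ × ℕ).2 = n + 1 from rfl),
        filter_ne_of_LP h, filter_eq_of_LP h]
      have hsup : (insert (x.2, n + 1) (∅ : Finset (ℕ × ℕ))).sup Prod.fst = x.2 := by simp
      rw [hsup]
  · intro A hA
    exact (congrArg f (reconstruct (mem_LP.1 hA))).symm

/-- the weight multiplier of the choice `k` for the new vertex -/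
noncomputable def cw (a b : ℤ) (k : ℕ) : ℤ := if k = 0 then b else if k = 1 then a else 1

lemma osL_pos {n : ℕ} {A : Finset (ℕ × ℕ)} (hn : 1 ≤ n) (h : IsLP n A) :
    1 ≤ osL n A := by
  have h1 : (1 : ℕ) ∈ (Finset.Icc 1 n).filter (fun j => ∀ p ∈ A, p.2 ≠ j) := by
    rw [Finset.mem_filter, Finset.mem_Icc]
    refine ⟨⟨le_refl 1, hn⟩, fun p hp hc => ?_⟩
    have := h.1 p hp
    omega
  rw [osL]
  exact Finset.card_pos.2 ⟨1, h1⟩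

lemma oneL_ext {n : ℕ} {A : Finset (ℕ × ℕ)} (h : IsLP n A) (k : ℕ) :
    oneL (extLP n A k) = oneL A + if k = 1 then 1 else 0 := by
  unfold extLP oneL
  by_cases h0 : k = 0
  · rw [if_pos h0, if_neg (by omega), add_zero]
  · rw [if_neg h0, Finset.filter_insert]
    by_cases h1 : k = 1
    · rw [if_pos (by simpa using h1), if_pos h1,
        Finset.card_insert_of_notMem (fun hc => notmem_top h k (Finset.mem_of_mem_filter _ hc))]
    · rw [if_neg (by simpa using h1), if_neg h1, add_zero]

lemma osL_ext {n : ℕ} {A : Finset (ℕ × ℕ)} (h : IsLP n A) {k : ℕ} (hk : k ≤ n) :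
    osL (n + 1) (extLP n A k) = osL n A + if k = 0 then 1 else 0 := by
  have hI : Finset.Icc 1 (n + 1) = insert (n + 1) (Finset.Icc 1 n) := by
    ext j
    simp only [Finset.mem_Icc, Finset.mem_insert]
    omega
  have hnotin : (n + 1) ∉ Finset.Icc 1 n := by simp
  unfold osL
  rw [hI, Finset.filter_insert]
  unfold extLP
  by_cases h0 : k = 0
  · rw [if_pos h0, if_pos h0]
    rw [if_pos (fun p hp hc => by have := h.1 p hp; omega)]
    rw [Finset.card_insert_of_notMem (fun hc => hnotin (Finset.mem_of_mem_filter _ hc))]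
  · rw [if_neg h0, if_neg h0, add_zero]
    rw [if_neg (by
      intro hc
      exact (hc (k, n + 1) (Finset.mem_insert_self _ _)) rfl)]
    congr 1
    apply Finset.filter_congr
    intro j hj
    have hjn := (Finset.mem_Icc.1 hj).2
    simp only [Finset.mem_insert, eq_iff_iff]
    constructor
    · intro hall p hp
      exact hall p (Or.inr hp)
    · intro hall p hp
      rcases hp with rfl | hp
      · intro hc
        rw [show ((k, n + 1) : ℕ × ℕ).2 = n + 1 from rfl] at hc
        omega
      · exact hall p hp

lemma weight_ext {n : ℕ} {A : Finset (ℕ × ℕ)} (hn : 1 ≤ n) (h : IsLP n A) {k : ℕ}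
    (hk : k ≤ n) (a b : ℤ) :
    a ^ oneL (extLP n A k) * b ^ (osL (n + 1) (extLP n A k) - 1) =
      a ^ oneL A * b ^ (osL n A - 1) * cw a b k := by
  have hos := osL_pos hn h
  rw [oneL_ext h k, osL_ext h hk]
  unfold cw
  by_cases h0 : k = 0
  · rw [if_pos h0, if_neg (by omega), if_pos h0, add_zero, Nat.add_sub_cancel]
    conv_lhs => rw [show osL n A = osL n A - 1 + 1 from by omega]
    rw [pow_succ]
    ring
  · rw [if_neg h0, if_neg h0, add_zero]
    by_cases h1 : k = 1
    · rw [if_pos h1, if_pos h1, pow_succ]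
      ring
    · rw [if_neg h1, if_neg h1, add_zero, mul_one]

lemma cw_sum (a b : ℤ) (n : ℕ) (hn : 1 ≤ n) :
    ∑ k ∈ Finset.range (n + 1), cw a b k = a + b + (n : ℤ) - 1 := by
  induction n with
  | zero => omega
  | succ m ih =>
    by_cases hm : 1 ≤ m
    · rw [Finset.sum_range_succ, ih hm, show cw a b (m + 1) = 1 from by
        unfold cw; rw [if_neg (by omega), if_neg (by omega)]]
      push_cast
      ring
    · have hm0 : m = 0 := by omega
      subst hm0
      rw [Finset.sum_range_succ, Finset.sum_range_succ, Finset.sum_range_zero]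
      unfold cw
      norm_num
      ring

lemma cw_sum_base (a b : ℤ) (m : ℕ) (hm : 2 ≤ m) :
    ∑ k ∈ Finset.range (m + 1), (if k ≠ 0 ∧ k ≠ m then cw a b k else 0) =
      a + (m : ℤ) - 2 := by
  rw [← Finset.sum_filter]
  have hset : (Finset.range (m + 1)).filter (fun k => k ≠ 0 ∧ k ≠ m) =
      Finset.range (m + 1) \ {0, m} := by
    rw [Finset.sdiff_eq_filter]
    apply Finset.filter_congr
    intro k _
    simp only [Finset.mem_insert, Finset.mem_singleton, eq_iff_iff]
    tauto
  rw [hset, Finset.sum_sdiff_eq_sub (by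
    intro k hk
    simp only [Finset.mem_insert, Finset.mem_singleton] at hk
    rw [Finset.mem_range]
    omega)]
  rw [cw_sum a b m (by omega), Finset.sum_pair (by omega : (0 : ℕ) ≠ m)]
  rw [show cw a b 0 = b from by unfold cw; rw [if_pos rfl],
    show cw a b m = 1 from by unfold cw; rw [if_neg (by omega), if_neg (by omega)]]
  ring

lemma cw_sum_step (a b : ℤ) (n i : ℕ) (hi : 3 ≤ i) (hin : i ≤ n) :
    ∑ k ∈ Finset.range (n + 1), (if k ≠ i then cw a b k else 0) =
      a + b + (n : ℤ) - 2 := by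
  rw [← Finset.sum_filter]
  have hset : (Finset.range (n + 1)).filter (fun k => k ≠ i) =
      Finset.range (n + 1) \ {i} := by
    rw [Finset.sdiff_eq_filter]
    apply Finset.filter_congr
    intro k _
    simp
  rw [hset, Finset.sum_sdiff_eq_sub (by
    intro k hk
    rw [Finset.mem_singleton] at hk
    rw [Finset.mem_range]
    omega)]
  rw [cw_sum a b n (by omega), Finset.sum_singleton,
    show cw a b i = 1 from by unfold cw; rw [if_neg (by omega), if_neg (by omega)]]
  ring

lemma LP_one : LP 1 = {∅} := by
  ext A
  rw [mem_LP, Finset.mem_singleton]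
  constructor
  · intro h
    ext p
    simp only [Finset.notMem_empty, iff_false]
    intro hp
    have := h.1 p hp
    omega
  · rintro rfl
    exact ⟨fun p hp => absurd hp (Finset.notMem_empty p),
      fun p hp => absurd hp (Finset.notMem_empty p)⟩

lemma fullsum (a b : ℤ) : ∀ n, 1 ≤ n →
    ∑ A ∈ LP n, a ^ oneL A * b ^ (osL n A - 1) =
      (ascPochhammer ℤ (n - 1)).eval (a + b) := by
  intro n
  induction n with
  | zero => omega
  | succ m ih =>
    intro _
    by_cases hm : 1 ≤ m
    · rw [decomp m, Finset.sum_product]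
      have key : ∀ A ∈ LP m,
          (∑ k ∈ Finset.range (m + 1),
            a ^ oneL (extLP m A k) * b ^ (osL (m + 1) (extLP m A k) - 1)) =
          a ^ oneL A * b ^ (osL m A - 1) * (a + b + (m : ℤ) - 1) := by
        intro A hA
        have hA' := mem_LP.1 hA
        rw [Finset.sum_congr rfl (fun k hk => weight_ext hm hA'
          (by have := Finset.mem_range.1 hk; omega) a b)]
        rw [← Finset.mul_sum, cw_sum a b m hm]
      rw [Finset.sum_congr rfl key, ← Finset.sum_mul, ih hm]
      rw [show m + 1 - 1 = (m - 1) + 1 from by omega, ascPochhammer_succ_right,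
        Polynomial.eval_mul, Polynomial.eval_add, Polynomial.eval_X]
      have : ((m - 1 : ℕ) : ℤ) = (m : ℤ) - 1 := by
        push_cast [hm]
        ring
      simp only [Polynomial.eval_natCast, this]
      ring
    · have hm0 : m = 0 := by omega
      subst hm0
      rw [LP_one, Finset.sum_singleton]
      have h1 : oneL (∅ : Finset (ℕ × ℕ)) = 0 := by simp [oneL]
      have h2 : osL 1 (∅ : Finset (ℕ × ℕ)) = 1 := by simp [osL]
      rw [h1, h2]
      simp [ascPochhammer]

lemma cond_ext_base {m : ℕ} (hm : 2 ≤ m) {A : Finset (ℕ × ℕ)} (hA : IsLP m A)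
    {k : ℕ} (hk : k ≤ m) :
    (IsDest (extLP m A k) (m + 1) ∧ (m, m + 1) ∉ extLP m A k) ↔ (k ≠ 0 ∧ k ≠ m) := by
  by_cases h0 : k = 0
  · subst h0
    rw [extLP, if_pos rfl]
    constructor
    · rintro ⟨⟨⟨p, hp, hp2⟩, -⟩, -⟩
      have := hA.1 p hp
      omega
    · rintro ⟨h, -⟩
      exact absurd rfl h
  · rw [extLP, if_neg h0]
    constructor
    · rintro ⟨-, hmem⟩
      refine ⟨h0, fun hkm => hmem ?_⟩
      rw [← hkm]
      exact Finset.mem_insert_self _ _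
    · rintro ⟨-, hkm⟩
      refine ⟨⟨⟨(k, m + 1), Finset.mem_insert_self _ _, rfl⟩, ?_⟩, ?_⟩
      · intro p hp
        rcases Finset.mem_insert.1 hp with rfl | hp
        · simp only
          omega
        · have := hA.1 p hp
          omega
      · intro hc
        rcases Finset.mem_insert.1 hc with heq | hc
        · rw [Prod.ext_iff] at heq
          exact hkm heq.1.symm
        · have := hA.1 _ hc
          omega

lemma cond_ext_step {n i : ℕ} (hi : 3 ≤ i) (hin : i ≤ n) {A : Finset (ℕ × ℕ)}
    (hA : IsLP n A) {k : ℕ} (hk : k ≤ n) :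
    (IsDest (extLP n A k) i ∧ (i - 1, i) ∉ extLP n A k) ↔
      ((IsDest A i ∧ (i - 1, i) ∉ A) ∧ k ≠ i) := by
  by_cases h0 : k = 0
  · subst h0
    rw [extLP, if_pos rfl]
    constructor
    · exact fun h => ⟨h, by omega⟩
    · exact fun h => h.1
  · rw [extLP, if_neg h0]
    constructor
    · rintro ⟨⟨⟨p, hp, hp2⟩, hall⟩, hmem⟩
      have hkne : k ≠ i := hall (k, n + 1) (Finset.mem_insert_self _ _)
      have hpA : p ∈ A := by
        rcases Finset.mem_insert.1 hp with rfl | hp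
        · simp only at hp2
          omega
        · exact hp
      refine ⟨⟨⟨⟨p, hpA, hp2⟩, fun q hq => hall q (Finset.mem_insert_of_mem hq)⟩,
        fun hc => hmem (Finset.mem_insert_of_mem hc)⟩, hkne⟩
    · rintro ⟨⟨⟨⟨p, hp, hp2⟩, hall⟩, hmem⟩, hkne⟩
      refine ⟨⟨⟨p, Finset.mem_insert_of_mem hp, hp2⟩, ?_⟩, ?_⟩
      · intro q hq
        rcases Finset.mem_insert.1 hq with rfl | hq
        · exact hkne
        · exact hall q hq
      · intro hc
        rcases Finset.mem_insert.1 hc with heq | hc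
        · rw [Prod.ext_iff] at heq
          omega
        · exact hmem hc

lemma Mbase (a b : ℤ) (i : ℕ) (hi : 3 ≤ i) :
    ∑ A ∈ (LP i).filter (fun A => IsDest A i ∧ (i - 1, i) ∉ A),
        a ^ oneL A * b ^ (osL i A - 1) =
      ((i : ℤ) - 3 + a) * (ascPochhammer ℤ (i - 2)).eval (a + b) := by
  obtain ⟨m, rfl⟩ : ∃ m, i = m + 1 := ⟨i - 1, by omega⟩
  have hm : 2 ≤ m := by omega
  rw [Finset.sum_filter, decomp m, Finset.sum_product]
  have key : ∀ A ∈ LP m,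
      (∑ k ∈ Finset.range (m + 1),
        if IsDest (extLP m A k) (m + 1) ∧ (m + 1 - 1, m + 1) ∉ extLP m A k then
          a ^ oneL (extLP m A k) * b ^ (osL (m + 1) (extLP m A k) - 1) else 0) =
      a ^ oneL A * b ^ (osL m A - 1) * (a + (m : ℤ) - 2) := by
    intro A hA
    have hA' := mem_LP.1 hA
    have step1 : ∀ k ∈ Finset.range (m + 1),
        (if IsDest (extLP m A k) (m + 1) ∧ (m + 1 - 1, m + 1) ∉ extLP m A k then
          a ^ oneL (extLP m A k) * b ^ (osL (m + 1) (extLP m A k) - 1) else 0) =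
        a ^ oneL A * b ^ (osL m A - 1) * (if k ≠ 0 ∧ k ≠ m then cw a b k else 0) := by
      intro k hk
      have hk' : k ≤ m := by have := Finset.mem_range.1 hk; omega
      rw [show m + 1 - 1 = m from by omega]
      rw [if_congr (cond_ext_base hm hA' hk') (weight_ext (by omega) hA' hk' a b) rfl]
      rw [mul_ite, mul_zero]
    rw [Finset.sum_congr rfl step1, ← Finset.mul_sum, cw_sum_base a b m hm]
  rw [Finset.sum_congr rfl key, ← Finset.sum_mul, fullsum a b m (by omega),
    show m + 1 - 2 = m - 1 from by omega]
  have : ((m : ℤ) + 1) - 3 + a = a + (m : ℤ) - 2 := by ring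
  rw [Nat.cast_add, Nat.cast_one, this]
  ring

lemma Mstep (a b : ℤ) (i n : ℕ) (hi : 3 ≤ i) (hin : i ≤ n)
    (ih : ∑ A ∈ (LP n).filter (fun A => IsDest A i ∧ (i - 1, i) ∉ A),
        a ^ oneL A * b ^ (osL n A - 1) =
      ((i : ℤ) - 3 + a) * (ascPochhammer ℤ (n - 2)).eval (a + b)) :
    ∑ A ∈ (LP (n + 1)).filter (fun A => IsDest A i ∧ (i - 1, i) ∉ A),
        a ^ oneL A * b ^ (osL (n + 1) A - 1) =
      ((i : ℤ) - 3 + a) * (ascPochhammer ℤ (n + 1 - 2)).eval (a + b) := by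
  rw [Finset.sum_filter, decomp n, Finset.sum_product]
  have key : ∀ A ∈ LP n,
      (∑ k ∈ Finset.range (n + 1),
        if IsDest (extLP n A k) i ∧ (i - 1, i) ∉ extLP n A k then
          a ^ oneL (extLP n A k) * b ^ (osL (n + 1) (extLP n A k) - 1) else 0) =
      (if IsDest A i ∧ (i - 1, i) ∉ A then a ^ oneL A * b ^ (osL n A - 1) else 0) *
        (a + b + (n : ℤ) - 2) := by
    intro A hA
    have hA' := mem_LP.1 hA
    have step1 : ∀ k ∈ Finset.range (n + 1),
        (if IsDest (extLP n A k) i ∧ (i - 1, i) ∉ extLP n A k then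
          a ^ oneL (extLP n A k) * b ^ (osL (n + 1) (extLP n A k) - 1) else 0) =
        (if IsDest A i ∧ (i - 1, i) ∉ A then a ^ oneL A * b ^ (osL n A - 1) else 0) *
          (if k ≠ i then cw a b k else 0) := by
      intro k hk
      have hk' : k ≤ n := by have := Finset.mem_range.1 hk; omega
      rw [if_congr (cond_ext_step hi hin hA' hk') (weight_ext (by omega) hA' hk' a b) rfl]
      by_cases hc : IsDest A i ∧ (i - 1, i) ∉ A
      · rw [if_pos hc]
        by_cases hki : k ≠ i
        · rw [if_pos ⟨hc, hki⟩, if_pos hki]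
        · rw [if_neg (fun h => hki h.2), if_neg hki, mul_zero]
      · rw [if_neg hc, if_neg (fun h => hc h.1), zero_mul]
    rw [Finset.sum_congr rfl step1, ← Finset.mul_sum, cw_sum_step a b n i hi hin]
  rw [Finset.sum_congr rfl key, ← Finset.sum_mul, ← Finset.sum_filter, ih]
  rw [show n + 1 - 2 = (n - 2) + 1 from by omega, ascPochhammer_succ_right,
    Polynomial.eval_mul, Polynomial.eval_add, Polynomial.eval_X]
  have : ((n - 2 : ℕ) : ℤ) = (n : ℤ) - 2 := by
    have : 2 ≤ n := by omega
    push_cast [this]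
    ring
  simp only [Polynomial.eval_natCast, this]
  ring

end LPaux
/-- for `3 ≤ i ≤ n`, summing over linked partitions of
`{1,…,n}` in which `i` is a destination and `(i-1, i)` is not an arc,
`∑ a^{one τ} b^{os τ - 1} = (i - 3 + a) (a+b)_{n-2}`. -/
theorem lp_M_enumeration (n i : ℕ) (hn : 3 ≤ n) (hi : 3 ≤ i) (hin : i ≤ n)
    (a b : ℤ) :
    ∑ A ∈ (LP n).filter (fun A => IsDest A i ∧ (i - 1, i) ∉ A),
        a ^ oneL A * b ^ (osL n A - 1) =
      ((i : ℤ) - 3 + a) * (ascPochhammer ℤ (n - 2)).eval (a + b) := by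
  clear hn
  induction n, hin using Nat.le_induction with
  | base => exact Mbase a b i hi
  | succ n hn ih => exact Mstep a b i n hi hn ih
end
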